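/- Let R > 0 and let f : [0, R) → ℝ be twice continuously differentiable with f(0) = 0, f'(0) = −1, and f' convex and strictly increasing. Set ν := sup{t ∈ [0, R) : f'(t) < 0}, n_f(t) := t − f(t)/f'(t) for t ∈ [0, ν), and ρ := sup{t ∈ (0, ν) : f(t)/(t f'(t)) − 1 < 1}. Fix t₀ ∈ (0, ρ) and define t_{k+1} := |n_f(t_k)| for k = 0, 1, …. Then the sequence {t_k} is well defined, strictly decreasing, contained in (0, ρ), and converges to 0; moreover the sequence {t_{k+1}/t_k²} is strictly decreasing and t_{k+1}/t_k² ≤ f''(t₀)/(2|f'(t₀)|) for all k. -/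

import Mathlib

open Set

section Aux
variable {R : ℝ} {f f' f'' : ℝ → ℝ}

lemma aux_contf' (hR : 0 < R)
    (hfd2 : ∀ t ∈ Set.Ico (0 : ℝ) R, HasDerivWithinAt f' (f'' t) (Set.Ico (0 : ℝ) R) t) :
    ContinuousOn f' (Set.Ico (0 : ℝ) R) :=
  fun t ht => (hfd2 t ht).continuousWithinAt

lemma aux_f''mono (hR : 0 < R)
    (hfd2 : ∀ t ∈ Set.Ico (0 : ℝ) R, HasDerivWithinAt f' (f'' t) (Set.Ico (0 : ℝ) R) t)
    (hfconv : ConvexOn ℝ (Set.Ico (0 : ℝ) R) f') :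
    MonotoneOn f'' (Set.Ico (0 : ℝ) R) := by
  intro u hu v hv huv
  rcases eq_or_lt_of_le huv with rfl | h
  · exact le_rfl
  · exact (hfconv.le_slope_of_hasDerivWithinAt hu hv h (hfd2 u hu)).trans
      (hfconv.slope_le_of_hasDerivWithinAt hu hv h (hfd2 v hv))

-- derivatives at interior points
lemma aux_hasDerivAt (hR : 0 < R)
    (hfd1 : ∀ t ∈ Set.Ico (0 : ℝ) R, HasDerivWithinAt f (f' t) (Set.Ico (0 : ℝ) R) t)
    {t : ℝ} (ht : t ∈ Set.Ioo (0:ℝ) R) : HasDerivAt f (f' t) t :=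
  (hfd1 t ⟨ht.1.le, ht.2⟩).hasDerivAt (Ico_mem_nhds ht.1 ht.2)

end Aux

section Aux2
variable {R : ℝ} {f f' f'' : ℝ → ℝ}

/-- Taylor bound: t f'(t) - f(t) ≤ t² f''(t)/2 for t ∈ (0,R). -/
lemma aux_L2 (hR : 0 < R)
    (hfd1 : ∀ t ∈ Set.Ico (0 : ℝ) R, HasDerivWithinAt f (f' t) (Set.Ico (0 : ℝ) R) t)
    (hfd2 : ∀ t ∈ Set.Ico (0 : ℝ) R, HasDerivWithinAt f' (f'' t) (Set.Ico (0 : ℝ) R) t)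
    (hf0 : f 0 = 0)
    (hfconv : ConvexOn ℝ (Set.Ico (0 : ℝ) R) f')
    {t : ℝ} (ht : t ∈ Set.Ioo (0:ℝ) R) :
    t * f' t - f t ≤ t ^ 2 * f'' t / 2 := by
  have hmono := aux_f''mono hR hfd2 hfconv
  have hIccIco : Set.Icc (0:ℝ) t ⊆ Set.Ico 0 R := Icc_subset_Ico_right ht.2
  have hIooIco : ∀ s ∈ Set.Ioo (0:ℝ) t, s ∈ Set.Ioo (0:ℝ) R :=
    fun s hs => ⟨hs.1, hs.2.trans ht.2⟩
  -- w s = f' s - f' t - f'' t * (s - t) is antitone on [0,t]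
  set w : ℝ → ℝ := fun s => f' s - f' t - f'' t * (s - t) with hw
  have hwderiv : ∀ s ∈ Set.Ioo (0:ℝ) t, HasDerivAt w (f'' s - f'' t) s := by
    intro s hs
    have h1 : HasDerivAt f' (f'' s) s := aux_hasDerivAt hR hfd2 (hIooIco s hs)
    have h2 : HasDerivAt (fun s => f' t + f'' t * (s - t)) (f'' t) s := by
      simpa using (((hasDerivAt_id s).sub_const t).const_mul (f'' t)).const_add (f' t)
    simpa [hw, sub_sub] using h1.fun_sub h2
  have hwcont : ContinuousOn w (Set.Icc 0 t) := by
    apply ContinuousOn.sub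
    · exact ((aux_contf' hR hfd2).mono hIccIco).sub continuousOn_const
    · exact (continuousOn_const.mul (continuousOn_id.sub continuousOn_const))
  have hwanti : AntitoneOn w (Set.Icc 0 t) := by
    apply antitoneOn_of_hasDerivWithinAt_nonpos (convex_Icc 0 t) hwcont
    · intro s hs
      rw [interior_Icc] at hs
      exact ((hwderiv s hs).hasDerivWithinAt)
    · intro s hs
      rw [interior_Icc] at hs
      have : f'' s ≤ f'' t := hmono ⟨hs.1.le, hs.2.trans ht.2⟩ ⟨ht.1.le, ht.2⟩ hs.2.le
      linarith
  have hwnonneg : ∀ s ∈ Set.Ioo (0:ℝ) t, 0 ≤ w s := by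
    intro s hs
    have : w t ≤ w s := hwanti ⟨hs.1.le, hs.2.le⟩ ⟨le_refl 0 |>.trans ht.1.le, le_refl t⟩ hs.2.le
    simpa [hw] using this
  -- ψ s = f s - f t - f' t (s - t) - f'' t (s-t)²/2 is monotone on [0,t]
  set ψ : ℝ → ℝ := fun s => f s - f t - f' t * (s - t) - f'' t * (s - t) ^ 2 / 2 with hψ
  have hψderiv : ∀ s ∈ Set.Ioo (0:ℝ) t, HasDerivAt ψ (w s) s := by
    intro s hs
    have h1 : HasDerivAt f (f' s) s := aux_hasDerivAt hR hfd1 (hIooIco s hs)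
    have h2 : HasDerivAt (fun s : ℝ => (s - t) ^ 2) (2 * (s - t)) s := by
      simpa using (((hasDerivAt_id s).sub_const t).fun_pow 2)
    have h3 : HasDerivAt ψ (f' s - f' t * 1 - f'' t * (2 * (s - t)) / 2) s := by
      have := ((h1.sub_const (f t)).fun_sub (((hasDerivAt_id s).sub_const t).const_mul (f' t))).fun_sub
        ((h2.const_mul (f'' t)).div_const 2)
      simpa [hψ] using this
    convert h3 using 1
    simp [hw]; ring
  have hψcont : ContinuousOn ψ (Set.Icc 0 t) := by
    have hfc : ContinuousOn f (Set.Ico 0 R) := fun u hu => (hfd1 u hu).continuousWithinAt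
    apply ContinuousOn.sub
    apply ContinuousOn.sub
    apply ContinuousOn.sub
    · exact hfc.mono hIccIco
    · exact continuousOn_const
    · exact continuousOn_const.mul (continuousOn_id.sub continuousOn_const)
    · exact ContinuousOn.div_const (continuousOn_const.mul (((continuousOn_id.sub continuousOn_const)).pow 2)) 2
  have hψmono : MonotoneOn ψ (Set.Icc 0 t) := by
    apply monotoneOn_of_hasDerivWithinAt_nonneg (convex_Icc 0 t) hψcont
    · intro s hs
      rw [interior_Icc] at hs
      exact (hψderiv s hs).hasDerivWithinAt
    · intro s hs
      rw [interior_Icc] at hs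
      exact hwnonneg s hs
  have := hψmono ⟨le_refl 0, ht.1.le⟩ ⟨ht.1.le, le_refl t⟩ ht.1.le
  simp [hψ, hf0] at this
  nlinarith [this]

end Aux2

section Aux3
variable {R : ℝ} {f f' f'' : ℝ → ℝ}

/-- J(t) = t f'(t) - f(t) > 0 on (0,R). -/
lemma aux_Jpos (hR : 0 < R)
    (hfd1 : ∀ t ∈ Set.Ico (0 : ℝ) R, HasDerivWithinAt f (f' t) (Set.Ico (0 : ℝ) R) t)
    (hf0 : f 0 = 0)
    (hfmono : StrictMonoOn f' (Set.Ico (0 : ℝ) R))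
    {t : ℝ} (ht : t ∈ Set.Ioo (0:ℝ) R) :
    0 < t * f' t - f t := by
  have hIccIco : Set.Icc (0:ℝ) t ⊆ Set.Ico 0 R := Icc_subset_Ico_right ht.2
  have hfc0 : ContinuousOn f (Set.Ico 0 R) := fun u hu => (hfd1 u hu).continuousWithinAt
  have hfc : ContinuousOn f (Set.Icc 0 t) := hfc0.mono hIccIco
  obtain ⟨c, hc, hceq⟩ := exists_hasDerivAt_eq_slope f f' ht.1 hfc
    (fun x hx => aux_hasDerivAt hR hfd1 ⟨hx.1, hx.2.trans ht.2⟩)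
  have hlt : f' c < f' t := hfmono ⟨hc.1.le, hc.2.trans ht.2⟩ ⟨ht.1.le, ht.2⟩ hc.2
  have : f t = f' c * t := by
    rw [hceq]; field_simp [hf0, ne_of_gt ht.1]; simp [hf0]
  rw [this]
  nlinarith [ht.1]

/-- J(t)/t² is monotone on (0,R). -/
lemma aux_L1 (hR : 0 < R)
    (hfd1 : ∀ t ∈ Set.Ico (0 : ℝ) R, HasDerivWithinAt f (f' t) (Set.Ico (0 : ℝ) R) t)
    (hfd2 : ∀ t ∈ Set.Ico (0 : ℝ) R, HasDerivWithinAt f' (f'' t) (Set.Ico (0 : ℝ) R) t)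
    (hf0 : f 0 = 0)
    (hfconv : ConvexOn ℝ (Set.Ico (0 : ℝ) R) f') :
    MonotoneOn (fun t => (t * f' t - f t) / t ^ 2) (Set.Ioo (0:ℝ) R) := by
  have hderiv : ∀ t ∈ Set.Ioo (0:ℝ) R, HasDerivAt (fun t => (t * f' t - f t) / t ^ 2)
      (((f' t + t * f'' t - f' t) * t ^ 2 - (t * f' t - f t) * (2 * t)) / (t ^ 2) ^ 2) t := by
    intro t ht
    have h1 : HasDerivAt (fun t => t * f' t - f t) (f' t + t * f'' t - f' t) t := by
      have := ((hasDerivAt_id t).fun_mul (aux_hasDerivAt hR hfd2 ht)).fun_sub (aux_hasDerivAt hR hfd1 ht)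
      simpa [mul_comm] using this
    have h2 : HasDerivAt (fun t : ℝ => t ^ 2) (2 * t) t := by
      simpa using hasDerivAt_pow 2 t
    exact h1.div h2 (pow_ne_zero 2 (ne_of_gt ht.1))
  apply monotoneOn_of_hasDerivWithinAt_nonneg (convex_Ioo 0 R)
  · intro t ht
    exact (hderiv t ht).continuousAt.continuousWithinAt
  · intro t ht
    rw [interior_Ioo] at ht
    exact (hderiv t ht).hasDerivWithinAt
  · intro t ht
    rw [interior_Ioo] at ht
    have hL2 := aux_L2 hR hfd1 hfd2 hf0 hfconv ht
    have ht0 := ht.1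
    apply div_nonneg _ (by positivity)
    nlinarith [hL2, ht0]

end Aux3
open RealInnerProductSpace Filter Metric Set

theorem majorant_sequence_convergence (R : ℝ) (hR : 0 < R)
    (f f' f'' : ℝ → ℝ)
    (hfd1 : ∀ t ∈ Set.Ico (0 : ℝ) R, HasDerivWithinAt f (f' t) (Set.Ico (0 : ℝ) R) t)
    (hfd2 : ∀ t ∈ Set.Ico (0 : ℝ) R, HasDerivWithinAt f' (f'' t) (Set.Ico (0 : ℝ) R) t)
    (hfc : ContinuousOn f'' (Set.Ico (0 : ℝ) R))
    (hf0 : f 0 = 0) (hf'0 : f' 0 = -1)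
    (hfconv : ConvexOn ℝ (Set.Ico (0 : ℝ) R) f')
    (hfmono : StrictMonoOn f' (Set.Ico (0 : ℝ) R))
    (ν : ℝ) (hν : ν = sSup {u : ℝ | u ∈ Set.Ico (0 : ℝ) R ∧ f' u < 0})
    (ρ : ℝ) (hρ : ρ = sSup {u : ℝ | u ∈ Set.Ioo (0 : ℝ) ν ∧ f u / (u * f' u) - 1 < 1})
    (tseq : ℕ → ℝ) (ht0 : tseq 0 ∈ Set.Ioo (0 : ℝ) ρ)
    (htk : ∀ k : ℕ, tseq (k + 1) = |tseq k - f (tseq k) / f' (tseq k)|) :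
    StrictAnti tseq ∧ (∀ k : ℕ, tseq k ∈ Set.Ioo (0 : ℝ) ρ) ∧
      Filter.Tendsto tseq Filter.atTop (nhds 0) ∧
      StrictAnti (fun k : ℕ => tseq (k + 1) / tseq k ^ 2) ∧
      ∀ k : ℕ, tseq (k + 1) / tseq k ^ 2 ≤ f'' (tseq 0) / (2 * |f' (tseq 0)|) := by
  -- basic facts about ν
  have hS0 : (0:ℝ) ∈ {u : ℝ | u ∈ Set.Ico (0 : ℝ) R ∧ f' u < 0} :=
    ⟨⟨le_rfl, hR⟩, by rw [hf'0]; norm_num⟩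
  have hlt : ∀ u : ℝ, 0 ≤ u → u < ν → u < R ∧ f' u < 0 := by
    intro u hu0 huν
    obtain ⟨w, hw, huw⟩ := exists_lt_of_lt_csSup ⟨0, hS0⟩ (by rw [← hν]; exact huν)
    have huR : u < R := huw.trans hw.1.2
    exact ⟨huR, lt_trans (hfmono ⟨hu0, huR⟩ hw.1 huw) hw.2⟩
  have hρpos : 0 < ρ := ht0.1.trans ht0.2
  have hTne : {u : ℝ | u ∈ Set.Ioo (0 : ℝ) ν ∧ f u / (u * f' u) - 1 < 1}.Nonempty := by
    by_contra h
    rw [Set.not_nonempty_iff_eq_empty] at h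
    rw [hρ, h, Real.sSup_empty] at hρpos
    exact lt_irrefl _ hρpos
  have hρν : ρ ≤ ν := by
    rw [hρ]; exact csSup_le hTne (fun u hu => hu.1.2.le)
  set g : ℝ → ℝ := fun u => f u / (u * f' u) - 1 with hg
  -- memberships
  have hmemR : ∀ t, t ∈ Set.Ioo (0:ℝ) ν → t ∈ Set.Ioo (0:ℝ) R ∧ f' t < 0 := by
    intro t ht
    obtain ⟨h1, h2⟩ := hlt t ht.1.le ht.2
    exact ⟨⟨ht.1, h1⟩, h2⟩
  have hJpos : ∀ t, t ∈ Set.Ioo (0:ℝ) ν → 0 < t * f' t - f t := by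
    intro t ht
    exact aux_Jpos hR hfd1 hf0 hfmono (hmemR t ht).1
  -- g t = Q t * (t / (-f' t)) where Q t = (t f' t - f t)/t²
  have hgQ : ∀ t, t ∈ Set.Ioo (0:ℝ) ν →
      g t = ((t * f' t - f t) / t ^ 2) * (t / (-f' t)) := by
    intro t ht
    obtain ⟨⟨ht0', htR⟩, hf'neg⟩ := hmemR t ht
    have h1 : t ≠ 0 := ne_of_gt ht0'
    have h2 : f' t ≠ 0 := ne_of_lt hf'neg
    simp only [hg]
    field_simp
    ring
  have hgpos : ∀ t, t ∈ Set.Ioo (0:ℝ) ν → 0 < g t := by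
    intro t ht
    obtain ⟨⟨ht0', htR⟩, hf'neg⟩ := hmemR t ht
    rw [hgQ t ht]
    exact mul_pos (div_pos (hJpos t ht) (by positivity))
      (div_pos ht0' (by linarith))
  have hQmono := aux_L1 hR hfd1 hfd2 hf0 hfconv
  have hgmono : StrictMonoOn g (Set.Ioo (0:ℝ) ν) := by
    intro u hu v hv huv
    obtain ⟨⟨hu0, huR⟩, hu'⟩ := hmemR u hu
    obtain ⟨⟨hv0, hvR⟩, hv'⟩ := hmemR v hv
    rw [hgQ u hu, hgQ v hv]
    have hQle : (u * f' u - f u) / u ^ 2 ≤ (v * f' v - f v) / v ^ 2 :=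
      hQmono ⟨hu0, huR⟩ ⟨hv0, hvR⟩ huv.le
    have hQupos : 0 < (u * f' u - f u) / u ^ 2 := div_pos (hJpos u hu) (by positivity)
    have hQvpos : 0 < (v * f' v - f v) / v ^ 2 := div_pos (hJpos v hv) (by positivity)
    have hf'lt : f' u < f' v := hfmono ⟨hu0.le, huR⟩ ⟨hv0.le, hvR⟩ huv
    have hdiv : u / (-f' u) < v / (-f' v) := by
      rw [div_lt_div_iff₀ (by linarith) (by linarith)]
      nlinarith
    calc (u * f' u - f u) / u ^ 2 * (u / (-f' u))
        ≤ (v * f' v - f v) / v ^ 2 * (u / (-f' u)) := by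
          apply mul_le_mul_of_nonneg_right hQle
          exact div_nonneg hu0.le (by linarith)
      _ < (v * f' v - f v) / v ^ 2 * (v / (-f' v)) :=
          mul_lt_mul_of_pos_left hdiv hQvpos
  have hmemν : ∀ t, t ∈ Set.Ioo (0:ℝ) ρ → t ∈ Set.Ioo (0:ℝ) ν ∧ g t < 1 := by
    intro t ht
    obtain ⟨w, hw, htw⟩ := exists_lt_of_lt_csSup hTne (by rw [← hρ]; exact ht.2)
    have htν : t ∈ Set.Ioo (0:ℝ) ν := ⟨ht.1, htw.trans hw.1.2⟩
    exact ⟨htν, lt_trans (hgmono htν hw.1 htw) hw.2⟩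
  -- recursion
  have hstep : ∀ k, tseq k ∈ Set.Ioo (0:ℝ) ρ → tseq (k+1) = tseq k * g (tseq k) := by
    intro k hk
    obtain ⟨htν, _⟩ := hmemν _ hk
    obtain ⟨⟨ht0', htR⟩, hf'neg⟩ := hmemR _ htν
    have h1 : tseq k ≠ 0 := ne_of_gt ht0'
    have h2 : f' (tseq k) ≠ 0 := ne_of_lt hf'neg
    rw [htk k]
    have : tseq k - f (tseq k) / f' (tseq k) = -(tseq k * g (tseq k)) := by
      simp only [hg]
      field_simp
      ring
    rw [this, abs_neg, abs_of_pos (mul_pos ht0' (hgpos _ htν))]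
  have key : ∀ k, tseq k ∈ Set.Ioo (0:ℝ) ρ := by
    intro k
    induction k with
    | zero => exact ht0
    | succ n ih =>
      obtain ⟨hν', hg1⟩ := hmemν _ ih
      rw [hstep n ih]
      constructor
      · exact mul_pos ih.1 (hgpos _ hν')
      · calc tseq n * g (tseq n) < tseq n * 1 := by
              exact mul_lt_mul_of_pos_left hg1 ih.1
          _ = tseq n := mul_one _
          _ < ρ := ih.2
  have hdec : ∀ k, tseq (k+1) < tseq k := by
    intro k
    obtain ⟨hν', hg1⟩ := hmemν _ (key k)
    rw [hstep k (key k)]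
    calc tseq k * g (tseq k) < tseq k * 1 := mul_lt_mul_of_pos_left hg1 (key k).1
      _ = tseq k := mul_one _
  have hanti : StrictAnti tseq := strictAnti_nat_of_succ_lt hdec
  -- convergence
  have htendsto : Filter.Tendsto tseq Filter.atTop (nhds 0) := by
    set q := g (tseq 0) with hqdef
    obtain ⟨h0ν, hq1⟩ := hmemν _ ht0
    have hq0 : 0 < q := hgpos _ h0ν
    have hle : ∀ k, tseq k ≤ tseq 0 * q ^ k := by
      intro k
      induction k with
      | zero => simp
      | succ n ih =>
        have hnν := (hmemν _ (key n)).1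
        have hgle : g (tseq n) ≤ q := by
          rcases Nat.eq_zero_or_pos n with rfl | hn
          · exact le_rfl
          · exact (hgmono.monotoneOn hnν h0ν (hanti.antitone (Nat.zero_le n)))
        calc tseq (n+1) = tseq n * g (tseq n) := hstep n (key n)
          _ ≤ tseq n * q := mul_le_mul_of_nonneg_left hgle (key n).1.le
          _ ≤ (tseq 0 * q ^ n) * q := mul_le_mul_of_nonneg_right ih hq0.le
          _ = tseq 0 * q ^ (n+1) := by ring
    have h1 : Filter.Tendsto (fun k : ℕ => tseq 0 * q ^ k) Filter.atTop (nhds 0) := by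
      have := (tendsto_pow_atTop_nhds_zero_of_lt_one hq0.le hq1).const_mul (tseq 0)
      simpa using this
    exact squeeze_zero (fun k => (key k).1.le) hle h1
  -- the ratio function
  set hfun : ℝ → ℝ := fun t => (t * f' t - f t) / (t ^ 2 * (-f' t)) with hhf
  have hratio : ∀ k, tseq (k+1) / tseq k ^ 2 = hfun (tseq k) := by
    intro k
    obtain ⟨htν, _⟩ := hmemν _ (key k)
    obtain ⟨⟨ht0', htR⟩, hf'neg⟩ := hmemR _ htν
    have h1 : tseq k ≠ 0 := ne_of_gt ht0'
    have h2 : f' (tseq k) ≠ 0 := ne_of_lt hf'neg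
    rw [hstep k (key k)]
    simp only [hg, hhf]
    field_simp
    ring
  have hhmono : StrictMonoOn hfun (Set.Ioo (0:ℝ) ν) := by
    intro u hu v hv huv
    obtain ⟨⟨hu0, huR⟩, hu'⟩ := hmemR u hu
    obtain ⟨⟨hv0, hvR⟩, hv'⟩ := hmemR v hv
    have heq : ∀ t, t ≠ 0 → hfun t = ((t * f' t - f t) / t ^ 2) * (1 / (-f' t)) := by
      intro t ht'
      simp only [hhf]
      field_simp
    rw [heq u (ne_of_gt hu0), heq v (ne_of_gt hv0)]
    have hQle : (u * f' u - f u) / u ^ 2 ≤ (v * f' v - f v) / v ^ 2 :=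
      hQmono ⟨hu0, huR⟩ ⟨hv0, hvR⟩ huv.le
    have hQvpos : 0 < (v * f' v - f v) / v ^ 2 := div_pos (hJpos v hv) (by positivity)
    have hf'lt : f' u < f' v := hfmono ⟨hu0.le, huR⟩ ⟨hv0.le, hvR⟩ huv
    have hdiv : 1 / (-f' u) < 1 / (-f' v) := by
      rw [div_lt_div_iff₀ (by linarith) (by linarith)]
      nlinarith
    calc (u * f' u - f u) / u ^ 2 * (1 / (-f' u))
        ≤ (v * f' v - f v) / v ^ 2 * (1 / (-f' u)) := by
          apply mul_le_mul_of_nonneg_right hQle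
          have : 0 < -f' u := by linarith
          positivity
      _ < (v * f' v - f v) / v ^ 2 * (1 / (-f' v)) :=
          mul_lt_mul_of_pos_left hdiv hQvpos
  have hratio_anti : StrictAnti (fun k : ℕ => tseq (k + 1) / tseq k ^ 2) := by
    apply strictAnti_nat_of_succ_lt
    intro k
    show tseq (k+1+1) / tseq (k+1) ^ 2 < tseq (k+1) / tseq k ^ 2
    rw [hratio k, hratio (k+1)]
    exact hhmono (hmemν _ (key (k+1))).1 (hmemν _ (key k)).1 (hdec k)
  refine ⟨hanti, key, htendsto, hratio_anti, ?_⟩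
  -- the bound
  intro k
  have h0ν := (hmemν _ ht0).1
  obtain ⟨⟨h00, h0R⟩, hf'0neg⟩ := hmemR _ h0ν
  have hb1 : hfun (tseq k) ≤ hfun (tseq 0) := by
    rcases Nat.eq_zero_or_pos k with rfl | hk
    · exact le_rfl
    · exact hhmono.monotoneOn (hmemν _ (key k)).1 h0ν (hanti.antitone (Nat.zero_le k))
  have hL2 := aux_L2 hR hfd1 hfd2 hf0 hfconv ⟨h00, h0R⟩
  have hb2 : hfun (tseq 0) ≤ f'' (tseq 0) / (2 * |f' (tseq 0)|) := by
    rw [abs_of_neg hf'0neg]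
    simp only [hhf]
    rw [div_le_div_iff₀ (mul_pos (by positivity) (by linarith)) (by nlinarith)]
    nlinarith [hL2, h00, hf'0neg]
  rw [hratio k]
  exact hb1.trans hb2
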